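/- A dense betweenness instance B = (V, R) is consistent (there exists a linear ordering of V with which every triplet of R is consistent) if and only if B contains no conflict on 4 vertices. -/

import Mathlib

variable {V : Type*} [DecidableEq V]

/-- `BtwOrd σ a b c`: `b` lies between `a` and `c` in the ordering `σ`. -/
def BtwOrd (σ : V → ℕ) (a b c : V) : Prop :=
  (σ a < σ b ∧ σ b < σ c) ∨ (σ c < σ b ∧ σ b < σ a)

/-- A dense betweenness instance is encoded by a map `R` assigning to each
`3`-subset `{a, b, c}` its chosen vertex: `R {a, b, c} = b` means that the
betweenness triplet `abc` (choosing `b`) belongs to the instance. Validity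
requires the chosen vertex to belong to the `3`-set. -/
def BetValid (R : Finset V → V) (S : Finset V) : Prop :=
  ∀ a b c : V, a ∈ S → b ∈ S → c ∈ S → a ≠ b → a ≠ c → b ≠ c →
    R {a, b, c} ∈ ({a, b, c} : Finset V)

/-- The betweenness instance `R` restricted to `S` is consistent: some linear
ordering of `S` makes all its triplets consistent. -/
def BetConsistentOn (R : Finset V → V) (S : Finset V) : Prop :=
  ∃ σ : V → ℕ, Set.InjOn σ ↑S ∧
    ∀ a b c : V, a ∈ S → b ∈ S → c ∈ S → a ≠ b → a ≠ c → b ≠ c →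
      R {a, b, c} = b → BtwOrd σ a b c

/-! ### Auxiliary machinery -/

/-- `σ` is consistent with `R` on `S`. -/
abbrev BetCons (R : Finset V → V) (σ : V → ℕ) (S : Finset V) : Prop :=
  ∀ a b c : V, a ∈ S → b ∈ S → c ∈ S → a ≠ b → a ≠ c → b ≠ c →
    R {a, b, c} = b → BtwOrd σ a b c

lemma triple_comm_left (a b c : V) : ({a, b, c} : Finset V) = {b, a, c} :=
  Finset.insert_comm a b {c}

lemma triple_comm_right (a b c : V) : ({a, b, c} : Finset V) = {a, c, b} := by
  rw [Finset.pair_comm]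

lemma R_mem [Fintype V] {R : Finset V → V} (hval : BetValid R Finset.univ)
    (a b c : V) (hab : a ≠ b) (hac : a ≠ c) (hbc : b ≠ c) :
    R {a, b, c} = a ∨ R {a, b, c} = b ∨ R {a, b, c} = c := by
  have := hval a b c (Finset.mem_univ _) (Finset.mem_univ _) (Finset.mem_univ _) hab hac hbc
  simpa using this

lemma btw_left {R : Finset V → V} {σ : V → ℕ} {S : Finset V} (hc : BetCons R σ S)
    {a b c : V} (ha : a ∈ S) (hb : b ∈ S) (hcS : c ∈ S)
    (hab : a ≠ b) (hac : a ≠ c) (hbc : b ≠ c) (h : R {a, b, c} = a) :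
    BtwOrd σ b a c :=
  hc b a c hb ha hcS hab.symm hbc hac (by rw [triple_comm_left]; exact h)

lemma btw_mid {R : Finset V → V} {σ : V → ℕ} {S : Finset V} (hc : BetCons R σ S)
    {a b c : V} (ha : a ∈ S) (hb : b ∈ S) (hcS : c ∈ S)
    (hab : a ≠ b) (hac : a ≠ c) (hbc : b ≠ c) (h : R {a, b, c} = b) :
    BtwOrd σ a b c :=
  hc a b c ha hb hcS hab hac hbc h

lemma btw_right {R : Finset V → V} {σ : V → ℕ} {S : Finset V} (hc : BetCons R σ S)
    {a b c : V} (ha : a ∈ S) (hb : b ∈ S) (hcS : c ∈ S)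
    (hab : a ≠ b) (hac : a ≠ c) (hbc : b ≠ c) (h : R {a, b, c} = c) :
    BtwOrd σ a c b :=
  hc a c b ha hcS hb hac hab hbc.symm (by rw [triple_comm_right]; exact h)

/-- `((τ x < τ y) ↔ R {x,y,v} ≠ x)` expresses "`v` lies to the right of `x`"
using partner `y`; in an ordering `τ` consistent on a set containing all three,
this is equivalent to `τ x < τ v`. -/
lemma side_iff [Fintype V] {R : Finset V → V} (hval : BetValid R Finset.univ)
    {τ : V → ℕ} {D : Finset V} (hc : BetCons R τ D)
    {x y v : V} (hx : x ∈ D) (hy : y ∈ D) (hv : v ∈ D)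
    (hxy : x ≠ y) (hxv : x ≠ v) (hyv : y ≠ v) :
    (((τ x < τ y) ↔ R {x, y, v} ≠ x) ↔ (τ x < τ v)) := by
  rcases R_mem hval x y v hxy hxv hyv with hm | hm | hm
  · have hb := btw_left hc hx hy hv hxy hxv hyv hm
    simp only [hm, ne_eq, not_true_eq_false, iff_false]
    unfold BtwOrd at hb
    omega
  · have hb := btw_mid hc hx hy hv hxy hxv hyv hm
    have hne : R {x, y, v} ≠ x := by rw [hm]; exact hxy.symm
    simp only [ne_eq, hne, not_false_eq_true, iff_true]
    unfold BtwOrd at hb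
    omega
  · have hb := btw_right hc hx hy hv hxy hxv hyv hm
    have hne : R {x, y, v} ≠ x := by rw [hm]; exact hxv.symm
    simp only [ne_eq, hne, not_false_eq_true, iff_true]
    unfold BtwOrd at hb
    omega

/-- Two consistent orderings agree or disagree on the orientation of pairs of a
common triple uniformly. -/
lemma orient [Fintype V] {R : Finset V → V} (hval : BetValid R Finset.univ)
    {σ τ : V → ℕ} {S D : Finset V} (hcσ : BetCons R σ S) (hcτ : BetCons R τ D)
    {x y z : V} (hxS : x ∈ S) (hyS : y ∈ S) (hzS : z ∈ S)
    (hxD : x ∈ D) (hyD : y ∈ D) (hzD : z ∈ D)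
    (hxy : x ≠ y) (hxz : x ≠ z) (hyz : y ≠ z) :
    (((σ x < σ y) ↔ (τ x < τ y)) ↔ ((σ x < σ z) ↔ (τ x < τ z))) := by
  rcases R_mem hval x y z hxy hxz hyz with hm | hm | hm
  · have h1 := btw_left hcσ hxS hyS hzS hxy hxz hyz hm
    have h2 := btw_left hcτ hxD hyD hzD hxy hxz hyz hm
    unfold BtwOrd at h1 h2
    omega
  · have h1 := btw_mid hcσ hxS hyS hzS hxy hxz hyz hm
    have h2 := btw_mid hcτ hxD hyD hzD hxy hxz hyz hm
    unfold BtwOrd at h1 h2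
    omega
  · have h1 := btw_right hcσ hxS hyS hzS hxy hxz hyz hm
    have h2 := btw_right hcτ hxD hyD hzD hxy hxz hyz hm
    unfold BtwOrd at h1 h2
    omega

lemma iff_juggle {p1 q1 r1 p2 q2 r2 : Prop} (A : (p1 ↔ q1) ↔ (p2 ↔ q2))
    (B : (q1 ↔ r1) ↔ (q2 ↔ r2)) : (p1 ↔ r1) ↔ (p2 ↔ r2) := by tauto

lemma bet_small {R : Finset V → V} (S : Finset V) (h : S.card ≤ 2) :
    BetConsistentOn R S := by
  refine ⟨fun x => S.toList.idxOf x, ?_, ?_⟩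
  · intro a ha b hb hab
    exact (List.idxOf_inj (Finset.mem_toList.mpr ha)).mp hab
  · intro a b c ha hb hc hab hac hbc _
    exfalso
    have hsub : ({a, b, c} : Finset V) ⊆ S := by
      simp [Finset.insert_subset_iff, ha, hb, hc]
    have h3 : ({a, b, c} : Finset V).card = 3 :=
      Finset.card_eq_three.mpr ⟨a, b, c, hab, hac, hbc, rfl⟩
    have := Finset.card_le_card hsub
    omega

lemma insert_step [Fintype V] {R : Finset V → V} (hval : BetValid R Finset.univ)
    (h4 : ∀ C : Finset V, C.card = 4 → BetConsistentOn R C)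
    {S : Finset V} {v : V} (hv : v ∈ S)
    (hT : BetConsistentOn R (S.erase v)) : BetConsistentOn R S := by
  classical
  obtain ⟨σ, hinj, hcons⟩ := hT
  set T := S.erase v with hTdef
  have hvT : v ∉ T := Finset.notMem_erase v S
  have hmemT : ∀ {x}, x ∈ S → x ≠ v → x ∈ T := fun hx hxv => Finset.mem_erase.mpr ⟨hxv, hx⟩
  have hvx : ∀ {x}, x ∈ T → v ≠ x := fun hx h => hvT (h ▸ hx)
  have hTS : ∀ {x}, x ∈ T → x ∈ S := fun hx => (Finset.mem_erase.mp hx).2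
  have hconsT : BetCons R σ T := hcons
  -- the "side" predicate is independent of the partner used
  have crux : ∀ x ∈ T, ∀ y ∈ T, ∀ z ∈ T, x ≠ y → x ≠ z → y ≠ z →
      (((σ x < σ y) ↔ R {x, y, v} ≠ x) ↔ ((σ x < σ z) ↔ R {x, z, v} ≠ x)) := by
    intro x hx y hy z hz hxy hxz hyz
    have h3 : ({x, y, z} : Finset V).card = 3 :=
      Finset.card_eq_three.mpr ⟨x, y, z, hxy, hxz, hyz, rfl⟩
    have hvm : v ∉ ({x, y, z} : Finset V) := by
      simp only [Finset.mem_insert, Finset.mem_singleton]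
      push_neg
      exact ⟨hvx hx, hvx hy, hvx hz⟩
    have hC4 : (insert v {x, y, z} : Finset V).card = 4 := by
      rw [Finset.card_insert_of_notMem hvm, h3]
    obtain ⟨τ, hτinj, hτcons⟩ := h4 _ hC4
    have hτconsC : BetCons R τ (insert v {x, y, z}) := hτcons
    have hxC : x ∈ (insert v {x, y, z} : Finset V) := by simp
    have hyC : y ∈ (insert v {x, y, z} : Finset V) := by simp
    have hzC : z ∈ (insert v {x, y, z} : Finset V) := by simp
    have hvC : v ∈ (insert v {x, y, z} : Finset V) := by simp
    have A := orient hval hconsT hτconsC hx hy hz hxC hyC hzC hxy hxz hyz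
    have B1 := side_iff hval hτconsC hxC hyC hvC hxy (hvx hx).symm (hvx hy).symm
    have B2 := side_iff hval hτconsC hxC hzC hvC hxz (hvx hx).symm (hvx hz).symm
    exact iff_juggle A (B1.trans B2.symm)
  set sP : V → Prop := fun x => ∃ y ∈ T, y ≠ x ∧ ((σ x < σ y) ↔ R {x, y, v} ≠ x) with hsPdef
  have s_iff : ∀ x ∈ T, ∀ y ∈ T, y ≠ x →
      (sP x ↔ ((σ x < σ y) ↔ R {x, y, v} ≠ x)) := by
    intro x hx y hy hyx
    constructor
    · rintro ⟨y', hy', hy'x, h⟩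
      by_cases hyy : y' = y
      · subst hyy; exact h
      · exact (crux x hx y' hy' y hy (Ne.symm hy'x) (Ne.symm hyx) hyy).mp h
    · intro h; exact ⟨y, hy, hyx, h⟩
  have cut : ∀ x ∈ T, ∀ y ∈ T, x ≠ y → σ x < σ y → sP y → sP x := by
    intro x hx y hy hxy hlt hsy
    have h := (s_iff y hy x hx hxy).mp hsy
    have hR : R {y, x, v} = y := by
      by_contra hne
      have := h.mpr hne
      omega
    have hR' : R {x, y, v} = y := by rw [triple_comm_left]; exact hR
    exact ⟨y, hy, Ne.symm hxy, iff_of_true hlt (by rw [hR']; exact Ne.symm hxy)⟩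
  set F : Finset V := T.filter sP with hFdef
  set pv : ℕ := if F.Nonempty then 2 * F.sup σ + 3 else 1 with hpvdef
  set σ' : V → ℕ := fun x => if x = v then pv else 2 * σ x + 2 with hσ'def
  have hσ'T : ∀ x ∈ T, σ' x = 2 * σ x + 2 := by
    intro x hx
    simp only [hσ'def]
    rw [if_neg (Finset.mem_erase.mp hx).1]
  have hσ'v : σ' v = pv := by simp [hσ'def]
  have hpv_odd : pv % 2 = 1 := by
    rw [hpvdef]
    split <;> omega
  have hlt_v : ∀ x ∈ T, sP x → σ' x < σ' v := by
    intro x hx hs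
    have hxF : x ∈ F := Finset.mem_filter.mpr ⟨hx, hs⟩
    have hFne : F.Nonempty := ⟨x, hxF⟩
    have hle : σ x ≤ F.sup σ := Finset.le_sup hxF
    rw [hσ'T x hx, hσ'v, hpvdef, if_pos hFne]
    omega
  have hgt_v : ∀ x ∈ T, ¬ sP x → σ' v < σ' x := by
    intro x hx hxs
    rw [hσ'T x hx, hσ'v, hpvdef]
    by_cases hF : F.Nonempty
    · rw [if_pos hF]
      obtain ⟨m, hmF, hms⟩ := Finset.exists_mem_eq_sup F hF σ
      have hmT : m ∈ T := (Finset.mem_filter.mp hmF).1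
      have hmP : sP m := (Finset.mem_filter.mp hmF).2
      have hxm : x ≠ m := fun h => hxs (h ▸ hmP)
      have hlt : σ m < σ x := by
        rcases lt_trichotomy (σ x) (σ m) with h | h | h
        · exact absurd (cut x hx m hmT hxm h hmP) hxs
        · exact absurd (hinj (Finset.mem_coe.mpr hx)
            (Finset.mem_coe.mpr hmT) h) hxm
        · exact h
      omega
    · rw [if_neg hF]
      omega
  have hmono : ∀ x ∈ T, ∀ y ∈ T, σ x < σ y → σ' x < σ' y := by
    intro x hx y hy h
    rw [hσ'T x hx, hσ'T y hy]
    omega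
  refine ⟨σ', ?_, ?_⟩
  · intro a ha b hb h
    by_cases hav : a = v <;> by_cases hbv : b = v
    · rw [hav, hbv]
    · exfalso
      have hbT : b ∈ T := hmemT hb hbv
      rw [hav, hσ'v, hσ'T b hbT] at h
      omega
    · exfalso
      have haT : a ∈ T := hmemT ha hav
      rw [hbv, hσ'v, hσ'T a haT] at h
      omega
    · have haT : a ∈ T := hmemT ha hav
      have hbT : b ∈ T := hmemT hb hbv
      rw [hσ'T a haT, hσ'T b hbT] at h
      exact hinj (Finset.mem_coe.mpr haT) (Finset.mem_coe.mpr hbT) (by omega)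
  · intro a b c ha hb hc hab hac hbc hR
    by_cases hbv : b = v
    · rw [hbv] at hR hab hbc ⊢
      have haT : a ∈ T := hmemT ha hab
      have hcT : c ∈ T := hmemT hc (Ne.symm hbc)
      rw [triple_comm_right] at hR
      rcases lt_trichotomy (σ a) (σ c) with hlt | heq | hlt
      · have hsa : sP a := ⟨c, hcT, Ne.symm hac, iff_of_true hlt (by rw [hR]; exact Ne.symm hab)⟩
        have hsc : ¬ sP c := by
          intro hs
          have h := (s_iff c hcT a haT hac).mp hs
          have hne : R {c, a, v} ≠ c := by
            rw [triple_comm_left c a v, hR]; exact hbc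
          have := h.mpr hne
          omega
        exact Or.inl ⟨hlt_v a haT hsa, hgt_v c hcT hsc⟩
      · exact absurd (hinj (Finset.mem_coe.mpr haT) (Finset.mem_coe.mpr hcT) heq) hac
      · have hsc : sP c := ⟨a, haT, hac, iff_of_true hlt
          (by rw [triple_comm_left c a v, hR]; exact hbc)⟩
        have hsa : ¬ sP a := by
          intro hs
          have h := (s_iff a haT c hcT (Ne.symm hac)).mp hs
          have hne : R {a, c, v} ≠ a := by rw [hR]; exact Ne.symm hab
          have := h.mpr hne
          omega
        exact Or.inr ⟨hlt_v c hcT hsc, hgt_v a haT hsa⟩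
    by_cases hav : a = v
    · rw [hav] at hR hab hac ⊢
      have hbT : b ∈ T := hmemT hb (Ne.symm hab)
      have hcT : c ∈ T := hmemT hc (Ne.symm hac)
      rw [triple_comm_left, triple_comm_right] at hR
      rcases lt_trichotomy (σ b) (σ c) with hlt | heq | hlt
      · have hsb : ¬ sP b := by
          intro hs
          have h := (s_iff b hbT c hcT (Ne.symm hbc)).mp hs
          have : R {b, c, v} ≠ b := h.mp hlt
          exact this hR
        exact Or.inl ⟨hgt_v b hbT hsb, hmono b hbT c hcT hlt⟩
      · exact absurd (hinj (Finset.mem_coe.mpr hbT) (Finset.mem_coe.mpr hcT) heq) hbc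
      · have hsb : sP b := ⟨c, hcT, Ne.symm hbc,
          iff_of_false (by omega) (by rw [hR]; simp)⟩
        exact Or.inr ⟨hmono c hcT b hbT hlt, hlt_v b hbT hsb⟩
    by_cases hcv : c = v
    · rw [hcv] at hR hac hbc ⊢
      have haT : a ∈ T := hmemT ha hav
      have hbT : b ∈ T := hmemT hb hbv
      rcases lt_trichotomy (σ a) (σ b) with hlt | heq | hlt
      · have hsb : sP b := by
          refine (s_iff b hbT a haT hab).mpr (iff_of_false (by omega) ?_)
          rw [triple_comm_left b a v, hR]; simp
        exact Or.inl ⟨hmono a haT b hbT hlt, hlt_v b hbT hsb⟩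
      · exact absurd (hinj (Finset.mem_coe.mpr haT) (Finset.mem_coe.mpr hbT) heq) hab
      · have hsb : ¬ sP b := by
          intro hs
          have h := (s_iff b hbT a haT hab).mp hs
          have : R {b, a, v} ≠ b := h.mp hlt
          exact this (by rw [triple_comm_left b a v]; exact hR)
        exact Or.inr ⟨hgt_v b hbT hsb, hmono b hbT a haT hlt⟩
    · have haT : a ∈ T := hmemT ha hav
      have hbT : b ∈ T := hmemT hb hbv
      have hcT : c ∈ T := hmemT hc hcv
      have h := hcons a b c haT hbT hcT hab hac hbc hR
      have e1 := hσ'T a haT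
      have e2 := hσ'T b hbT
      have e3 := hσ'T c hcT
      unfold BtwOrd at h ⊢
      rw [e1, e2, e3]
      omega

/-- A dense betweenness instance is consistent if and only if it contains no
conflict on four vertices. -/
theorem betweenness_consistent_iff_no_conflict4 [Fintype V]
    (R : Finset V → V) (hval : BetValid R Finset.univ) :
    BetConsistentOn R Finset.univ ↔
      ∀ C : Finset V, C.card = 4 → BetConsistentOn R C := by
  constructor
  · rintro ⟨σ, hinj, hcons⟩ C _
    exact ⟨σ, hinj.mono (by simp), fun a b c _ _ _ hab hac hbc hR =>
      hcons a b c (Finset.mem_univ a) (Finset.mem_univ b) (Finset.mem_univ c) hab hac hbc hR⟩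
  · intro h4
    have main : ∀ (n : ℕ) (S : Finset V), S.card ≤ n → BetConsistentOn R S := by
      intro n
      induction n with
      | zero => intro S hS; exact bet_small S (by omega)
      | succ n ih =>
        intro S hS
        by_cases hle : S.card ≤ n
        · exact ih S hle
        · by_cases hsmall : S.card ≤ 2
          · exact bet_small S hsmall
          · have hpos : 0 < S.card := by omega
            obtain ⟨v, hv⟩ := Finset.card_pos.mp hpos
            have hTcard : (S.erase v).card ≤ n := by
              rw [Finset.card_erase_of_mem hv]
              omega
            exact insert_step hval h4 hv (ih (S.erase v) hTcard)
    exact main (Finset.univ.card) Finset.univ le_rfl
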